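/- arXiv:1305.1614 — 2 statements merged into one kernel-verified Lean document; each statement's English description precedes it below -/
import Mathlib

section
/- Let φ : Op(D^n) → R be a real analytic function on a neighborhood of the unit real disc D^n ⊂ R^n ⊂ C^n satisfying dd^C φ = 0, φ|_{D^n} = 0, and ∂φ/∂y_k = 0 on D^n for all k = 1,…,n. Then φ vanishes to infinite order along D^n (and hence φ ≡ 0 near D^n by unique continuation for real analytic functions). -/
/-- The twisted differential `d^ℂφ(v) = dφ(iv)` of a real-valued function on `ℂⁿ`. -/
noncomputable def dC {n : ℕ} (φ : (Fin n → ℂ) → ℝ) (x v : Fin n → ℂ) : ℝ :=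
  fderiv ℝ φ x (Complex.I • v)

/-- The 2-form `dd^ℂφ`, evaluated on (constant) vector fields:
`dd^ℂφ(v,w) = ∂_v (d^ℂφ(w)) − ∂_w (d^ℂφ(v))`. -/
noncomputable def ddC {n : ℕ} (φ : (Fin n → ℂ) → ℝ) (x v w : Fin n → ℂ) : ℝ :=
  fderiv ℝ (fun y => dC φ y w) x v - fderiv ℝ (fun y => dC φ y v) x w

/-- `φ` is i-convex (strictly plurisubharmonic) on `U`:
`ω_φ(v, iv) > 0` for `v ≠ 0`, where `ω_φ = −dd^ℂφ`. -/
def IConvexOn {n : ℕ} (U : Set (Fin n → ℂ)) (φ : (Fin n → ℂ) → ℝ) : Prop :=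
  ∀ x ∈ U, ∀ v : Fin n → ℂ, v ≠ 0 → 0 < -ddC φ x v (Complex.I • v)

/-- The closed unit disc `D^n ⊂ ℝⁿ ⊂ ℂⁿ`. -/
def realDisc (n : ℕ) : Set (Fin n → ℂ) :=
  {z | (∀ k, (z k).im = 0) ∧ (∑ k, (z k).re ^ 2) ≤ 1}

namespace VanishAux

open Set Filter Topology

/-- Directional derivative operator. -/
noncomputable def dd {n : ℕ} (v : Fin n → ℂ) (f : (Fin n → ℂ) → ℝ) : (Fin n → ℂ) → ℝ :=
  fun x => fderiv ℝ f x v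

/-- Index type for the real basis of `ℂⁿ`. -/
abbrev Idx (n : ℕ) := Σ _ : Fin n, Fin 2

/-- The basis vectors `e_k` and `i e_k`. -/
noncomputable def uvec {n : ℕ} (p : Idx n) : Fin n → ℂ :=
  Pi.single p.1 (![1, Complex.I] p.2)

/-- Iterated directional derivatives along a list of basis indices, the head of the
list being applied first (innermost). -/
noncomputable def DL {n : ℕ} : List (Idx n) → ((Fin n → ℂ) → ℝ) → ((Fin n → ℂ) → ℝ)
  | [], f => f
  | p :: L, f => DL L (dd (uvec p) f)

/-- The open real disc slice. -/
def Sset (n : ℕ) : Set (Fin n → ℂ) :=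
  {z | (∀ k, (z k).im = 0) ∧ (∑ k, (z k).re ^ 2) < 1}

variable {n : ℕ} {U : Set (Fin n → ℂ)}

theorem Sset_subset_realDisc : Sset n ⊆ realDisc n :=
  fun _ hz => ⟨hz.1, le_of_lt hz.2⟩

theorem dd_analytic (hU : IsOpen U) {f : (Fin n → ℂ) → ℝ}
    (hf : AnalyticOnNhd ℝ f U) (v : Fin n → ℂ) : AnalyticOnNhd ℝ (dd v f) U := by
  have h1 : AnalyticOnNhd ℝ (fderiv ℝ f) U := hf.fderiv_of_isOpen hU
  exact (ContinuousLinearMap.apply ℝ ℝ v).comp_analyticOnNhd h1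

theorem DL_analytic (hU : IsOpen U) :
    ∀ (L : List (Idx n)) {f : (Fin n → ℂ) → ℝ},
      AnalyticOnNhd ℝ f U → AnalyticOnNhd ℝ (DL L f) U
  | [], _, hf => hf
  | _ :: L, _, hf => DL_analytic hU L (dd_analytic hU hf _)

theorem dd_congr (hU : IsOpen U) {f g : (Fin n → ℂ) → ℝ} (h : EqOn f g U) (v : Fin n → ℂ) :
    EqOn (dd v f) (dd v g) U := by
  intro x hx
  have hev : f =ᶠ[nhds x] g := eventually_of_mem (hU.mem_nhds hx) h
  simp only [dd, hev.fderiv_eq]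

theorem DL_congr (hU : IsOpen U) :
    ∀ (L : List (Idx n)) {f g : (Fin n → ℂ) → ℝ},
      EqOn f g U → EqOn (DL L f) (DL L g) U
  | [], _, _, h => h
  | _ :: L, _, _, h => DL_congr hU L (dd_congr hU h _)

theorem dd_neg (v : Fin n → ℂ) (f : (Fin n → ℂ) → ℝ) :
    dd v (fun y => -f y) = fun x => -(dd v f x) := by
  funext x
  simp only [dd, fderiv_fun_neg, ContinuousLinearMap.neg_apply]

theorem DL_neg :
    ∀ (L : List (Idx n)) (f : (Fin n → ℂ) → ℝ) (x : Fin n → ℂ),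
      DL L (fun y => -f y) x = -(DL L f x)
  | [], _, _ => rfl
  | p :: L, f, x => by
      show DL L (dd (uvec p) fun y => -f y) x = -(DL L (dd (uvec p) f) x)
      rw [dd_neg]
      exact DL_neg L (dd (uvec p) f) x

theorem dd_dd {f : (Fin n → ℂ) → ℝ} {x : Fin n → ℂ}
    (hd : DifferentiableAt ℝ (fderiv ℝ f) x) (v w : Fin n → ℂ) :
    dd v (dd w f) x = fderiv ℝ (fderiv ℝ f) x v w := by
  have h := fderiv_clm_apply (c := fderiv ℝ f) (u := fun _ => w) hd (differentiableAt_const w)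
  have h2 : dd v (dd w f) x
      = fderiv ℝ (fun y => (fderiv ℝ f y) ((fun _ => w) y)) x v := rfl
  rw [h2, h]
  simp [ContinuousLinearMap.flip_apply]

theorem dd_swap (hU : IsOpen U) {f : (Fin n → ℂ) → ℝ} (hf : AnalyticOnNhd ℝ f U)
    (v w : Fin n → ℂ) {x : Fin n → ℂ} (hx : x ∈ U) :
    dd v (dd w f) x = dd w (dd v f) x := by
  have hdf : AnalyticOnNhd ℝ (fderiv ℝ f) U := hf.fderiv_of_isOpen hU
  have hd : DifferentiableAt ℝ (fderiv ℝ f) x := (hdf x hx).differentiableAt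
  have hsymm : IsSymmSndFDerivAt ℝ f x :=
    ((hf x hx).contDiffAt (n := 2)).isSymmSndFDerivAt (by simp)
  rw [dd_dd hd, dd_dd hd]
  exact hsymm v w

theorem DL_perm (hU : IsOpen U) {L M : List (Idx n)} (h : L.Perm M) :
    ∀ {f : (Fin n → ℂ) → ℝ}, AnalyticOnNhd ℝ f U → EqOn (DL L f) (DL M f) U := by
  induction h with
  | nil => exact fun _ _ _ => rfl
  | cons p h ih => exact fun hf => ih (dd_analytic hU hf _)
  | swap p q l =>
      intro f hf
      show EqOn (DL l (dd (uvec p) (dd (uvec q) f))) (DL l (dd (uvec q) (dd (uvec p) f))) U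
      exact DL_congr hU l (fun x hx => dd_swap hU hf _ _ hx)
  | trans h₁ h₂ ih₁ ih₂ =>
      intro f hf
      exact fun x hx => (ih₁ hf hx).trans (ih₂ hf hx)

theorem perturb_mem_Sset {x : Fin n → ℂ} (hx : x ∈ Sset n) (k : Fin n) :
    ∀ᶠ t : ℝ in nhds 0, x + t • (Pi.single k (1 : ℂ) : Fin n → ℂ) ∈ Sset n := by
  have hF : Continuous fun t : ℝ => ∑ j, ((x + t • (Pi.single k (1 : ℂ) : Fin n → ℂ)) j).re ^ 2 := by
    apply continuous_finset_sum
    intro j _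
    have : Continuous fun t : ℝ => ((x j) + t • ((Pi.single k (1 : ℂ) : Fin n → ℂ) j)).re :=
      Complex.continuous_re.comp (continuous_const.add (continuous_id.smul continuous_const))
    exact this.pow 2
  have h0 : (∑ j, ((x + (0:ℝ) • (Pi.single k (1 : ℂ) : Fin n → ℂ)) j).re ^ 2) < 1 := by
    simpa using hx.2
  have hlt : ∀ᶠ t : ℝ in nhds 0, (∑ j, ((x + t • (Pi.single k (1 : ℂ) : Fin n → ℂ)) j).re ^ 2) < 1 :=
    (hF.continuousAt).eventually_lt continuousAt_const h0
  filter_upwards [hlt] with t ht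
  refine ⟨fun j => ?_, ht⟩
  have him : ((Pi.single k (1 : ℂ) : Fin n → ℂ) j).im = 0 := by
    rcases eq_or_ne j k with h | h
    · subst h; simp
    · simp [Pi.single_apply, h]
  simp [Complex.add_im, Complex.smul_im, hx.1 j, him]

theorem dd_x_vanish (hU : IsOpen U) {g : (Fin n → ℂ) → ℝ} (hg : AnalyticOnNhd ℝ g U)
    (hSU : Sset n ⊆ U) (h0 : ∀ x ∈ Sset n, g x = 0) (k : Fin n) :
    ∀ x ∈ Sset n, dd (Pi.single k (1 : ℂ)) g x = 0 := by
  intro x hx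
  have hd : DifferentiableAt ℝ g x := (hg x (hSU hx)).differentiableAt
  show fderiv ℝ g x (Pi.single k (1 : ℂ)) = 0
  rw [← hd.lineDeriv_eq_fderiv]
  have hev : (fun t : ℝ => g (x + t • (Pi.single k (1 : ℂ) : Fin n → ℂ))) =ᶠ[nhds (0 : ℝ)]
      (fun _ => (0 : ℝ)) := by
    filter_upwards [perturb_mem_Sset hx k] with t ht using h0 _ ht
  unfold lineDeriv
  rw [hev.deriv_eq]
  simp

theorem uvec_zero (k : Fin n) : uvec ⟨k, 0⟩ = Pi.single k (1 : ℂ) := by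
  simp [uvec]

theorem uvec_one (k : Fin n) : uvec ⟨k, 1⟩ = Pi.single k Complex.I := by
  simp [uvec]

/-- Pure-`x` iterated derivatives of a function vanishing on the open slice vanish there. -/
theorem DL_all_x (hU : IsOpen U) (hSU : Sset n ⊆ U) :
    ∀ (L : List (Idx n)), L.countP (fun p => p.2 == 1) = 0 →
      ∀ {g : (Fin n → ℂ) → ℝ}, AnalyticOnNhd ℝ g U → (∀ x ∈ Sset n, g x = 0) →
        ∀ x ∈ Sset n, DL L g x = 0 := by
  intro L
  induction L with
  | nil => intro _ g hg h0 x hx; exact h0 x hx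
  | cons p L ih =>
      intro hc g hg h0 x hx
      rw [List.countP_cons] at hc
      have hp2 : ¬ (p.2 == (1 : Fin 2)) = true := by
        intro h; simp [h] at hc
      have hL : L.countP (fun p => p.2 == 1) = 0 := by omega
      obtain ⟨k, i⟩ := p
      have hi : i = 0 := by
        fin_cases i
        · rfl
        · simp at hp2
      subst hi
      show DL L (dd (uvec ⟨k, 0⟩) g) x = 0
      rw [uvec_zero]
      exact ih hL (by rw [← uvec_zero]; exact dd_analytic hU hg _)
        (dd_x_vanish hU hg hSU h0 k) x hx

/-- The main inductive vanishing result. -/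
theorem DL_vanish (hU : IsOpen U) (hSU : Sset n ⊆ U) {φ : (Fin n → ℂ) → ℝ}
    (hφ : AnalyticOnNhd ℝ φ U) (h0 : ∀ x ∈ Sset n, φ x = 0)
    (hy' : ∀ x ∈ Sset n, ∀ k : Fin n, dd (uvec ⟨k, 1⟩) φ x = 0)
    (hkey : ∀ j k : Fin n, ∀ x ∈ U,
      dd (uvec ⟨k, 1⟩) (dd (uvec ⟨j, 1⟩) φ) x
        = - dd (uvec ⟨j, 0⟩) (dd (uvec ⟨k, 0⟩) φ) x) :
    ∀ (L : List (Idx n)), ∀ x ∈ Sset n, DL L φ x = 0 := by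
  intro L
  generalize hc : L.countP (fun p => p.2 == 1) = c
  induction c using Nat.strong_induction_on generalizing L with
  | _ c IH =>
    intro x hx
    have hxU : x ∈ U := hSU hx
    rcases Nat.eq_zero_or_pos c with h0c | hposc
    · subst h0c
      exact DL_all_x hU hSU L hc hφ h0 x hx
    · -- extract a first `y` index
      have hpos : 0 < L.countP (fun p => p.2 == 1) := by omega
      obtain ⟨p, hpL, hp⟩ := List.countP_pos_iff.mp hpos
      obtain ⟨j, i⟩ := p
      have hi : i = 1 := by
        fin_cases i
        · simp at hp
        · rfl
      subst hi
      have hperm1 : L.Perm (⟨j, 1⟩ :: L.erase ⟨j, 1⟩) := List.perm_cons_erase hpL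
      set L₁ := L.erase (⟨j, 1⟩ : Idx n) with hL₁
      have hcount1 : L₁.countP (fun p => p.2 == 1) = c - 1 := by
        have := hperm1.countP_eq (fun p => p.2 == 1)
        rw [hc] at this
        rw [List.countP_cons] at this
        simp at this
        omega
      rcases Nat.eq_zero_or_pos (c - 1) with h1c | hposc1
      · -- exactly one `y` index
        have heq := DL_perm hU hperm1 hφ hxU
        rw [heq]
        show DL L₁ (dd (uvec ⟨j, 1⟩) φ) x = 0
        exact DL_all_x hU hSU L₁ (by omega) (dd_analytic hU hφ _)
          (fun z hz => hy' z hz j) x hx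
      · -- at least two `y` indices
        have hpos2 : 0 < L₁.countP (fun p => p.2 == 1) := by omega
        obtain ⟨q, hqL, hq⟩ := List.countP_pos_iff.mp hpos2
        obtain ⟨k, i⟩ := q
        have hi : i = 1 := by
          fin_cases i
          · simp at hq
          · rfl
        subst hi
        have hperm2 : L₁.Perm (⟨k, 1⟩ :: L₁.erase ⟨k, 1⟩) := List.perm_cons_erase hqL
        set L₂ := L₁.erase (⟨k, 1⟩ : Idx n) with hL₂
        have hcount2 : L₂.countP (fun p => p.2 == 1) = c - 2 := by
          have := hperm2.countP_eq (fun p => p.2 == 1)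
          rw [hcount1] at this
          rw [List.countP_cons] at this
          simp at this
          omega
        have hperm : L.Perm (⟨j, 1⟩ :: ⟨k, 1⟩ :: L₂) :=
          hperm1.trans (hperm2.cons _)
        have heq := DL_perm hU hperm hφ hxU
        rw [heq]
        show DL L₂ (dd (uvec ⟨k, 1⟩) (dd (uvec ⟨j, 1⟩) φ)) x = 0
        have hcongr : EqOn (dd (uvec ⟨k, 1⟩) (dd (uvec ⟨j, 1⟩) φ))
            (fun y => -(dd (uvec ⟨j, 0⟩) (dd (uvec ⟨k, 0⟩) φ) y)) U :=
          fun z hz => hkey j k z hz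
        rw [DL_congr hU L₂ hcongr hxU]
        rw [DL_neg]
        have : DL ((⟨k, 0⟩ : Idx n) :: ⟨j, 0⟩ :: L₂) φ x = 0 := by
          apply IH (c - 2) (by omega) _ _ x hx
          rw [List.countP_cons, List.countP_cons]
          simp [hcount2]
        show -(DL ((⟨k, 0⟩ : Idx n) :: ⟨j, 0⟩ :: L₂) φ x) = 0
        rw [this, neg_zero]

/-- Iterated derivatives within `U` on basis tuples are given by `DL`. -/
theorem iteratedFDerivWithin_eq_DL (hU : IsOpen U) :
    ∀ (m : ℕ) {g : (Fin n → ℂ) → ℝ}, AnalyticOnNhd ℝ g U →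
      ∀ x ∈ U, ∀ w : Fin m → Idx n,
        iteratedFDerivWithin ℝ m g U x (fun i => uvec (w i))
          = DL (List.ofFn w).reverse g x := by
  intro m
  induction m with
  | zero =>
      intro g hg x hx w
      simp [DL, iteratedFDerivWithin_zero_apply]
  | succ m IH =>
      intro g hg x hx w
      have hud : UniqueDiffOn ℝ U := hU.uniqueDiffOn
      rw [iteratedFDerivWithin_succ_apply_right hud hx]
      have hcong : EqOn (fderivWithin ℝ g U) (fderiv ℝ g) U :=
        fun y hy => fderivWithin_of_isOpen hU hy
      rw [iteratedFDerivWithin_congr hcong hx]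
      have hfa : AnalyticOnNhd ℝ (fderiv ℝ g) U := hg.fderiv_of_isOpen hU
      have hcd : ContDiffOn ℝ m (fderiv ℝ g) U := hfa.contDiffOn hud
      have hcomp := (ContinuousLinearMap.apply ℝ ℝ (uvec (w (Fin.last m)))).iteratedFDerivWithin_comp_left
        (hcd x hx) hud hx (le_refl ((m : ℕ∞) : WithTop ℕ∞))
      have hdd : (⇑(ContinuousLinearMap.apply ℝ ℝ (uvec (w (Fin.last m)))) ∘ fderiv ℝ g)
          = dd (uvec (w (Fin.last m))) g := rfl
      rw [hdd] at hcomp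
      have hinit : (Fin.init fun i => uvec (w i)) = fun i => uvec (Fin.init w i) := rfl
      have key : iteratedFDerivWithin ℝ m (fderiv ℝ g) U x (Fin.init fun i => uvec (w i))
          ((fun i => uvec (w i)) (Fin.last m))
          = iteratedFDerivWithin ℝ m (dd (uvec (w (Fin.last m))) g) U x
              (fun i => uvec (Fin.init w i)) := by
        rw [hcomp, hinit]
        simp [ContinuousLinearMap.compContinuousMultilinearMap_coe,
          ContinuousLinearMap.apply_apply]
      rw [key, IH (dd_analytic hU hg _) x hx (Fin.init w)]
      have hlist : (List.ofFn w).reverse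
          = w (Fin.last m) :: (List.ofFn (Fin.init w)).reverse := by
        rw [List.ofFn_succ']
        rw [List.concat_eq_append, List.reverse_append]
        rfl
      rw [hlist]
      rfl

end VanishAux

open VanishAux Set Filter Topology

/-- A real analytic function on a neighborhood of `D^n ⊂ ℝⁿ ⊂ ℂⁿ` with `dd^ℂ φ = 0`,
vanishing on `D^n` and with vanishing `y`-derivatives along `D^n`, vanishes to infinite order
along `D^n`, and hence vanishes identically on a neighborhood of `D^n`. -/
theorem vanishing_of_pluriharmonic_flat (n : ℕ) (U : Set (Fin n → ℂ)) (hU : IsOpen U)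
    (hDU : realDisc n ⊆ U) (φ : (Fin n → ℂ) → ℝ)
    (hφ : ∀ x ∈ U, AnalyticAt ℝ φ x)
    (hddc : ∀ x ∈ U, ∀ v w : Fin n → ℂ, ddC φ x v w = 0)
    (h0 : ∀ x ∈ realDisc n, φ x = 0)
    (hy : ∀ x ∈ realDisc n, ∀ k : Fin n, fderiv ℝ φ x (Pi.single k Complex.I) = 0) :
    (∀ x ∈ realDisc n, ∀ m : ℕ, iteratedFDeriv ℝ m φ x = 0) ∧
      ∃ V : Set (Fin n → ℂ), IsOpen V ∧ realDisc n ⊆ V ∧ ∀ z ∈ V, φ z = 0 := by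
  have hAN : AnalyticOnNhd ℝ φ U := fun x hx => hφ x hx
  have hSU : Sset n ⊆ U := fun z hz => hDU (Sset_subset_realDisc hz)
  -- the key second-order identity from `ddC φ = 0`
  have hkey : ∀ j k : Fin n, ∀ x ∈ U,
      dd (uvec ⟨k, 1⟩) (dd (uvec ⟨j, 1⟩) φ) x
        = - dd (uvec ⟨j, 0⟩) (dd (uvec ⟨k, 0⟩) φ) x := by
    intro j k x hx
    have h := hddc x hx (Pi.single j (1 : ℂ)) (Pi.single k Complex.I)
    have hw : Complex.I • (Pi.single k Complex.I : Fin n → ℂ) = -(Pi.single k (1 : ℂ) : Fin n → ℂ) := by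
      funext l
      rcases eq_or_ne l k with h' | h'
      · subst h'
        simp [Pi.single_apply, Complex.I_mul_I]
      · simp [Pi.single_apply, h']
    have hv : Complex.I • (Pi.single j (1 : ℂ) : Fin n → ℂ) = (Pi.single j Complex.I : Fin n → ℂ) := by
      funext l
      rcases eq_or_ne l j with h' | h'
      · subst h'; simp
      · simp [Pi.single_apply, h']
    rw [ddC] at h
    have e1 : (fun y => dC φ y (Pi.single k Complex.I))
        = fun y => -(dd (Pi.single k (1 : ℂ)) φ y) := by
      funext y
      rw [dC, hw]
      simp [dd]
    have e2 : (fun y => dC φ y (Pi.single j (1 : ℂ)))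
        = dd (Pi.single j Complex.I) φ := by
      funext y
      rw [dC, hv]
      rfl
    rw [e1, e2] at h
    rw [show (fun y => -(dd (Pi.single k (1:ℂ)) φ y)) = (fun y => -(dd (Pi.single k (1:ℂ)) φ) y) from rfl] at h
    rw [fderiv_fun_neg] at h
    rw [uvec_zero, uvec_zero, uvec_one, uvec_one]
    show fderiv ℝ (dd (Pi.single j Complex.I) φ) x (Pi.single k Complex.I)
      = - fderiv ℝ (dd (Pi.single k (1:ℂ)) φ) x (Pi.single j (1:ℂ))
    have := sub_eq_zero.mp h
    rw [ContinuousLinearMap.neg_apply] at this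
    linarith [this]
  have hy' : ∀ x ∈ Sset n, ∀ k : Fin n, dd (uvec ⟨k, 1⟩) φ x = 0 := by
    intro x hx k
    rw [uvec_one]
    exact hy x (Sset_subset_realDisc hx) k
  have h0' : ∀ x ∈ Sset n, φ x = 0 := fun x hx => h0 x (Sset_subset_realDisc hx)
  -- vanishing of all iterated derivatives on the open slice
  have hS : ∀ x ∈ Sset n, ∀ m : ℕ, iteratedFDeriv ℝ m φ x = 0 := by
    intro x hx m
    have hxU : x ∈ U := hSU hx
    have hwithin : iteratedFDerivWithin ℝ m φ U x = iteratedFDeriv ℝ m φ x :=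
      iteratedFDerivWithin_of_isOpen m hU hxU
    rw [← hwithin]
    apply ContinuousMultilinearMap.toMultilinearMap_injective
    apply Module.Basis.ext_multilinear (fun _ => Pi.basis fun _ : Fin n => Complex.basisOneI)
    intro w
    have hb : ∀ p : Idx n, (Pi.basis fun _ : Fin n => Complex.basisOneI) p = uvec p := by
      intro p
      rw [Pi.basis_apply]
      simp [uvec]
    show iteratedFDerivWithin ℝ m φ U x
        (fun i => (Pi.basis fun _ : Fin n => Complex.basisOneI) (w i)) = 0
    have : (fun i => (Pi.basis fun _ : Fin n => Complex.basisOneI) (w i))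
        = fun i => uvec (w i) := by
      funext i; exact hb (w i)
    rw [this, iteratedFDerivWithin_eq_DL hU m hAN x hxU w]
    exact DL_vanish hU hSU hAN h0' hy' hkey _ x hx
  -- extend to the closed disc by continuity
  have hpart1 : ∀ x ∈ realDisc n, ∀ m : ℕ, iteratedFDeriv ℝ m φ x = 0 := by
    intro x hx m
    have hxU : x ∈ U := hDU hx
    have hcl : x ∈ closure (Sset n) := by
      have ht : Tendsto (fun t : ℝ => t • x) (nhdsWithin 1 (Iio 1)) (nhds x) := by
        have h1 : Tendsto (fun t : ℝ => t • x) (nhds 1) (nhds ((1 : ℝ) • x)) :=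
          (continuous_id.smul continuous_const).tendsto 1
        rw [one_smul] at h1
        exact h1.mono_left nhdsWithin_le_nhds
      refine mem_closure_of_tendsto ht ?_
      have hgt : ∀ᶠ t : ℝ in nhdsWithin 1 (Iio 1), (0 : ℝ) < t :=
        (eventually_gt_nhds (by norm_num : (0:ℝ) < 1)).filter_mono nhdsWithin_le_nhds
      filter_upwards [eventually_mem_nhdsWithin, hgt] with t ht1 ht0
      have ht1' : t < 1 := ht1
      constructor
      · intro k
        simp [Complex.smul_im, hx.1 k]
      · have hre : ∀ k, ((t • x) k).re = t * (x k).re := by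
          intro k
          simp [Complex.smul_re]
        calc (∑ k, ((t • x) k).re ^ 2) = ∑ k, (t * (x k).re) ^ 2 := by
              apply Finset.sum_congr rfl; intro k _; rw [hre k]
          _ = t ^ 2 * ∑ k, (x k).re ^ 2 := by
              rw [Finset.mul_sum]; apply Finset.sum_congr rfl; intro k _; ring
          _ < 1 := by nlinarith [hx.2]
    have hcont : ContinuousAt (iteratedFDeriv ℝ m φ) x :=
      ((hAN.iteratedFDeriv m) x hxU).continuousAt
    have h1 : Tendsto (iteratedFDeriv ℝ m φ) (nhdsWithin x (Sset n))
        (nhds (iteratedFDeriv ℝ m φ x)) := hcont.continuousWithinAt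
    have h2 : Tendsto (iteratedFDeriv ℝ m φ) (nhdsWithin x (Sset n)) (nhds 0) := by
      apply Tendsto.congr' _ tendsto_const_nhds
      filter_upwards [eventually_mem_nhdsWithin] with z hz
      exact (hS z hz m).symm
    haveI : (nhdsWithin x (Sset n)).NeBot := mem_closure_iff_nhdsWithin_neBot.mp hcl
    exact tendsto_nhds_unique h1 h2
  refine ⟨hpart1, ?_⟩
  -- part 2: vanishing on a neighborhood
  have hev : ∀ x ∈ realDisc n, ∀ᶠ z in nhds x, φ z = 0 := by
    intro x hx
    obtain ⟨p, hp⟩ := hφ x (hDU hx)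
    obtain ⟨r, hball⟩ := hp
    have hz : ∀ y ∈ Metric.eball (0 : Fin n → ℂ) r, φ (x + y) = 0 := by
      intro y hy
      have hs := hball.hasSum_iteratedFDeriv hy
      have hzero : (fun m : ℕ => ((Nat.factorial m : ℝ))⁻¹ • iteratedFDeriv ℝ m φ x fun _ => y)
          = fun _ => (0 : ℝ) := by
        funext m
        rw [hpart1 x hx m]
        simp
      rw [hzero] at hs
      have h0sum : HasSum (fun _ : ℕ => (0 : ℝ)) 0 := hasSum_zero
      exact (hs.unique h0sum)
    filter_upwards [EMetric.ball_mem_nhds x hball.r_pos] with z hz'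
    have hmem : z - x ∈ Metric.eball (0 : Fin n → ℂ) r := by
      rw [Metric.mem_eball, edist_eq_enorm_sub, sub_zero]
      rw [Metric.mem_eball, edist_eq_enorm_sub] at hz'
      exact hz'
    have := hz (z - x) hmem
    rwa [add_sub_cancel] at this
  refine ⟨interior {z | φ z = 0}, isOpen_interior, ?_, ?_⟩
  · intro x hx
    rw [mem_interior_iff_mem_nhds]
    exact hev x hx
  · intro z hz
    have hmem : z ∈ {z | φ z = 0} := interior_subset hz
    exact hmem
end

section
/- Uniqueness of Kähler potentials with prescribed boundary data on a totally real disc: if φ₁, φ₂ are real analytic functions on a neighborhood of D^n in C^n with −dd^C φ₁ = −dd^C φ₂, φ₁|_{D^n} = φ₂|_{D^n}, and d^C φ₁|_{T D^n} = d^C φ₂|_{T D^n} = 0, then φ₁ = φ₂ on a neighborhood of D^n. -/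
namespace PotentialUniquenessAux

open Complex Filter Metric Set Topology

variable {n : ℕ}

/-- Directional derivative operator. -/
noncomputable def Dd (v : Fin n → ℂ) (f : (Fin n → ℂ) → ℝ) : (Fin n → ℂ) → ℝ :=
  fun x => fderiv ℝ f x v

/-- Real basis vectors. -/
def ev (k : Fin n) : Fin n → ℂ := Pi.single k 1

/-- Imaginary basis vectors. -/
noncomputable def iv (k : Fin n) : Fin n → ℂ := Complex.I • ev k

lemma iv_eq_single (k : Fin n) : iv k = Pi.single k Complex.I := by
  funext j
  by_cases h : j = k <;> simp [iv, ev, Pi.single_apply, h]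

lemma ev_im (k j : Fin n) : (ev k j).im = 0 := by
  by_cases h : j = k <;> simp [ev, Pi.single_apply, h]

/-- The open real disc. -/
def Om (n : ℕ) : Set (Fin n → ℂ) := {z | (∀ k, (z k).im = 0) ∧ (∑ k, (z k).re ^ 2) < 1}

lemma Om_subset_disc : Om n ⊆ realDisc n := fun z hz => ⟨hz.1, le_of_lt hz.2⟩

lemma zero_mem_Om : (0 : Fin n → ℂ) ∈ Om n := by
  constructor
  · intro k; simp
  · simp

variable {U : Set (Fin n → ℂ)}

lemma Dd_analytic (hf : AnalyticOnNhd ℝ f U) (v : Fin n → ℂ) :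
    AnalyticOnNhd ℝ (Dd v f) U :=
  (ContinuousLinearMap.apply ℝ ℝ v).comp_analyticOnNhd hf.fderiv

lemma Dd_fderiv_apply (hf : AnalyticOnNhd ℝ f U) {x : Fin n → ℂ} (hx : x ∈ U)
    (a b : Fin n → ℂ) : Dd a (Dd b f) x = fderiv ℝ (fderiv ℝ f) x a b := by
  have hder : HasFDerivAt (fderiv ℝ f) (fderiv ℝ (fderiv ℝ f) x) x :=
    ((hf.fderiv x hx).differentiableAt).hasFDerivAt
  have h1 : HasFDerivAt (fun y => fderiv ℝ f y b)
      ((ContinuousLinearMap.apply ℝ ℝ b).comp (fderiv ℝ (fderiv ℝ f) x)) x :=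
    (ContinuousLinearMap.apply ℝ ℝ b).hasFDerivAt.comp x hder
  show fderiv ℝ (fun y => fderiv ℝ f y b) x a = _
  rw [h1.fderiv]
  rfl

lemma Dd_comm (hf : AnalyticOnNhd ℝ f U) {x : Fin n → ℂ} (hx : x ∈ U)
    (a b : Fin n → ℂ) : Dd a (Dd b f) x = Dd b (Dd a f) x := by
  have hsym : IsSymmSndFDerivAt ℝ f x :=
    ((hf x hx).contDiffAt).isSymmSndFDerivAt (n := 2) (by simp [minSmoothness_of_isRCLikeNormedField])
  rw [Dd_fderiv_apply hf hx a b, Dd_fderiv_apply hf hx b a]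
  exact hsym a b

lemma Dd_tangent {f : (Fin n → ℂ) → ℝ} {x : Fin n → ℂ}
    (hf : DifferentiableAt ℝ f x) (h0 : ∀ z ∈ Om n, f z = 0) (hx : x ∈ Om n) (k : Fin n) :
    Dd (ev k) f x = 0 := by
  have hc : HasDerivAt (fun t : ℝ => x + t • ev k) (ev k) 0 := by
    simpa using ((hasDerivAt_id (0 : ℝ)).smul_const (ev k)).const_add x
  have hfa : HasFDerivAt f (fderiv ℝ f x) ((fun t : ℝ => x + t • ev k) 0) := by
    simpa using hf.hasFDerivAt
  have hg : HasDerivAt (fun t : ℝ => f (x + t • ev k)) (fderiv ℝ f x (ev k)) 0 :=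
    hfa.comp_hasDerivAt 0 hc
  have himag : ∀ t : ℝ, ∀ j, ((x + t • ev k) j).im = 0 := by
    intro t j
    simp [Complex.add_im, Complex.smul_im, hx.1 j, ev_im]
  have hsum : ∀ᶠ t in 𝓝 (0 : ℝ), (∑ j, ((x + t • ev k) j).re ^ 2) < 1 := by
    have hcont : Continuous fun t : ℝ => ∑ j, ((x + t • ev k) j).re ^ 2 :=
      continuous_finset_sum _ fun j _ =>
        (Complex.continuous_re.comp (continuous_const.add
          (continuous_id.smul continuous_const))).pow 2
    have h0lt : (∑ j, ((x + (0 : ℝ) • ev k) j).re ^ 2) < 1 := by simpa using hx.2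
    exact hcont.continuousAt.eventually_lt_const h0lt
  have hev : (fun t : ℝ => f (x + t • ev k)) =ᶠ[𝓝 (0 : ℝ)] fun _ => 0 := by
    filter_upwards [hsum] with t ht
    exact h0 _ ⟨himag t, ht⟩
  have hd0 : deriv (fun t : ℝ => f (x + t • ev k)) 0 = 0 := by
    rw [hev.deriv_eq]; simp
  show fderiv ℝ f x (ev k) = 0
  rw [← hg.deriv, hd0]

lemma Dd_congr (hU : IsOpen U) {f g : (Fin n → ℂ) → ℝ} (h : ∀ y ∈ U, f y = g y)
    {x : Fin n → ℂ} (hx : x ∈ U) (v : Fin n → ℂ) : Dd v f x = Dd v g x := by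
  have hfg : f =ᶠ[𝓝 x] g := by filter_upwards [hU.mem_nhds hx] using h
  show fderiv ℝ f x v = fderiv ℝ g x v
  rw [hfg.fderiv_eq]

lemma Dd_sub {f g : (Fin n → ℂ) → ℝ} {x : Fin n → ℂ}
    (hf : DifferentiableAt ℝ f x) (hg : DifferentiableAt ℝ g x) (v : Fin n → ℂ) :
    Dd v (fun y => f y - g y) x = Dd v f x - Dd v g x := by
  show fderiv ℝ (fun y => f y - g y) x v = _
  rw [fderiv_fun_sub hf hg]
  rfl

/-- The invariant propagated through successive differentiations. -/
def Good (U : Set (Fin n → ℂ)) (f : (Fin n → ℂ) → ℝ) : Prop :=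
  AnalyticOnNhd ℝ f U ∧ (∀ x ∈ Om n, f x = 0) ∧ (∀ k, ∀ x ∈ Om n, Dd (iv k) f x = 0) ∧
    (∀ j k, ∀ x ∈ U, Dd (ev j) (Dd (ev k) f) x + Dd (iv k) (Dd (iv j) f) x = 0)

lemma good_D (hU : IsOpen U) (hΩ : Om n ⊆ U) {f : (Fin n → ℂ) → ℝ} (hf : Good U f)
    (v : Fin n → ℂ) (hv : (∃ k, v = ev k) ∨ ∃ k, v = iv k) : Good U (Dd v f) := by
  obtain ⟨hA, h0, hi, hR⟩ := hf
  have hDf : ∀ w : Fin n → ℂ, AnalyticOnNhd ℝ (Dd w f) U := Dd_analytic hA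
  refine ⟨Dd_analytic hA v, ?_, ?_, ?_⟩
  · rcases hv with ⟨k, rfl⟩ | ⟨k, rfl⟩
    · exact fun x hx => Dd_tangent ((hA x (hΩ hx)).differentiableAt) h0 hx k
    · exact fun x hx => hi k x hx
  · rcases hv with ⟨j, rfl⟩ | ⟨j, rfl⟩
    · intro k x hx
      rw [Dd_comm hA (hΩ hx) (iv k) (ev j)]
      exact Dd_tangent ((hDf (iv k) x (hΩ hx)).differentiableAt)
        (fun z hz => hi k z hz) hx j
    · intro k x hx
      have h4 := hR j k x (hΩ hx)
      have h5 : Dd (ev j) (Dd (ev k) f) x = 0 :=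
        Dd_tangent ((hDf (ev k) x (hΩ hx)).differentiableAt)
          (fun z hz => Dd_tangent ((hA z (hΩ hz)).differentiableAt) h0 hz k) hx j
      linarith
  · intro j k x hx
    have e1 : Dd (ev j) (Dd (ev k) (Dd v f)) x = Dd v (Dd (ev j) (Dd (ev k) f)) x := by
      calc Dd (ev j) (Dd (ev k) (Dd v f)) x
          = Dd (ev j) (Dd v (Dd (ev k) f)) x :=
            Dd_congr hU (fun y hy => Dd_comm hA hy (ev k) v) hx (ev j)
        _ = Dd v (Dd (ev j) (Dd (ev k) f)) x := Dd_comm (hDf (ev k)) hx (ev j) v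
    have e2 : Dd (iv k) (Dd (iv j) (Dd v f)) x = Dd v (Dd (iv k) (Dd (iv j) f)) x := by
      calc Dd (iv k) (Dd (iv j) (Dd v f)) x
          = Dd (iv k) (Dd v (Dd (iv j) f)) x :=
            Dd_congr hU (fun y hy => Dd_comm hA hy (iv j) v) hx (iv k)
        _ = Dd v (Dd (iv k) (Dd (iv j) f)) x := Dd_comm (hDf (iv j)) hx (iv k) v
    rw [e1, e2]
    have hA1 : DifferentiableAt ℝ (Dd (ev j) (Dd (ev k) f)) x :=
      ((Dd_analytic (hDf (ev k)) (ev j)) x hx).differentiableAt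
    have hA2 : DifferentiableAt ℝ (Dd (iv k) (Dd (iv j) f)) x :=
      ((Dd_analytic (hDf (iv j)) (iv k)) x hx).differentiableAt
    have hsum : Dd v (Dd (ev j) (Dd (ev k) f)) x + Dd v (Dd (iv k) (Dd (iv j) f)) x
        = fderiv ℝ (fun y => Dd (ev j) (Dd (ev k) f) y + Dd (iv k) (Dd (iv j) f) y) x v := by
      rw [fderiv_fun_add hA1 hA2]
      rfl
    rw [hsum]
    have hz : (fun y => Dd (ev j) (Dd (ev k) f) y + Dd (iv k) (Dd (iv j) f) y)
        =ᶠ[𝓝 x] fun _ => 0 := by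
      filter_upwards [hU.mem_nhds hx] with y hy using hR j k y hy
    rw [hz.fderiv_eq]
    simp

/-- Iterated directional derivatives indexed by a list. -/
noncomputable def DerL : List (Fin n → ℂ) → ((Fin n → ℂ) → ℝ) → ((Fin n → ℂ) → ℝ)
  | [], f => f
  | a :: L, f => Dd a (DerL L f)

lemma DerL_analytic {f : (Fin n → ℂ) → ℝ} (hf : AnalyticOnNhd ℝ f U) :
    ∀ L : List (Fin n → ℂ), AnalyticOnNhd ℝ (DerL L f) U
  | [] => hf
  | a :: L => Dd_analytic (DerL_analytic hf L) a

lemma good_DerL (hU : IsOpen U) (hΩ : Om n ⊆ U) {f : (Fin n → ℂ) → ℝ} (hf : Good U f) :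
    ∀ L : List (Fin n → ℂ),
      (∀ v ∈ L, (∃ k, v = ev k) ∨ ∃ k, v = iv k) → Good U (DerL L f)
  | [], _ => hf
  | a :: L, h => by
    have hL := good_DerL hU hΩ hf L (fun v hv => h v (List.mem_cons_of_mem a hv))
    exact good_D hU hΩ hL a (h a List.mem_cons_self)

lemma iter_eq_DerL (hU : IsOpen U) {f : (Fin n → ℂ) → ℝ} (hf : AnalyticOnNhd ℝ f U) :
    ∀ (m : ℕ) (v : Fin m → (Fin n → ℂ)) (x : Fin n → ℂ), x ∈ U →
      iteratedFDeriv ℝ m f x v = DerL (List.ofFn v) f x := by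
  intro m
  induction m with
  | zero =>
    intro v x hx
    simp [DerL, iteratedFDeriv_zero_apply]
  | succ m ih =>
    intro v x hx
    rw [iteratedFDeriv_succ_apply_left]
    have hit : AnalyticOnNhd ℝ (iteratedFDeriv ℝ m f) U := hf.iteratedFDeriv m
    have hder : HasFDerivAt (iteratedFDeriv ℝ m f) (fderiv ℝ (iteratedFDeriv ℝ m f) x) x :=
      ((hit x hx).differentiableAt).hasFDerivAt
    set L := ContinuousMultilinearMap.apply ℝ (fun _ : Fin m => (Fin n → ℂ)) ℝ (Fin.tail v)
      with hL
    have h1 : HasFDerivAt (fun y => iteratedFDeriv ℝ m f y (Fin.tail v))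
        (L.comp (fderiv ℝ (iteratedFDeriv ℝ m f) x)) x :=
      L.hasFDerivAt.comp x hder
    have h2 : fderiv ℝ (iteratedFDeriv ℝ m f) x (v 0) (Fin.tail v)
        = fderiv ℝ (fun y => iteratedFDeriv ℝ m f y (Fin.tail v)) x (v 0) := by
      rw [h1.fderiv]
      rfl
    rw [h2]
    have h3 : fderiv ℝ (fun y => iteratedFDeriv ℝ m f y (Fin.tail v)) x (v 0)
        = fderiv ℝ (DerL (List.ofFn (Fin.tail v)) f) x (v 0) := by
      have hee : (fun y => iteratedFDeriv ℝ m f y (Fin.tail v))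
          =ᶠ[𝓝 x] DerL (List.ofFn (Fin.tail v)) f := by
        filter_upwards [hU.mem_nhds hx] with y hy using ih (Fin.tail v) y hy
      rw [hee.fderiv_eq]
    rw [h3, List.ofFn_succ]
    rfl

lemma basis_vector_form (s : Σ _ : Fin n, Fin 2) :
    (Pi.basis fun _ : Fin n => Complex.basisOneI) s = ev s.1 ∨
      (Pi.basis fun _ : Fin n => Complex.basisOneI) s = iv s.1 := by
  rcases s with ⟨k, b⟩
  fin_cases b
  · left
    rw [Pi.basis_apply]
    simp [ev, Complex.coe_basisOneI]
  · right
    rw [Pi.basis_apply, iv_eq_single]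
    simp [Complex.coe_basisOneI]

end PotentialUniquenessAux

open PotentialUniquenessAux Complex Filter Metric Set Topology in
/-- Uniqueness of Kähler potentials with prescribed boundary data on the totally real disc
`D^n`: two real analytic functions with the same `dd^ℂ`, the same restriction to `D^n`, and
whose twisted differentials `d^ℂφ` annihilate the tangent spaces of `D^n`, agree on a
neighborhood of `D^n`. -/
theorem potential_uniqueness (n : ℕ) (U : Set (Fin n → ℂ)) (hU : IsOpen U)
    (hDU : realDisc n ⊆ U) (φ₁ φ₂ : (Fin n → ℂ) → ℝ)
    (hφ₁ : ∀ x ∈ U, AnalyticAt ℝ φ₁ x) (hφ₂ : ∀ x ∈ U, AnalyticAt ℝ φ₂ x)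
    (hddc : ∀ x ∈ U, ∀ v w : Fin n → ℂ, ddC φ₁ x v w = ddC φ₂ x v w)
    (heq : ∀ x ∈ realDisc n, φ₁ x = φ₂ x)
    (ht₁ : ∀ x ∈ realDisc n, ∀ v : Fin n → ℂ, (∀ k, (v k).im = 0) → dC φ₁ x v = 0)
    (ht₂ : ∀ x ∈ realDisc n, ∀ v : Fin n → ℂ, (∀ k, (v k).im = 0) → dC φ₂ x v = 0) :
    ∃ V : Set (Fin n → ℂ), IsOpen V ∧ realDisc n ⊆ V ∧ Set.EqOn φ₁ φ₂ V := by
  classical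
  set ψ : (Fin n → ℂ) → ℝ := fun y => φ₁ y - φ₂ y with hψdef
  have hΩU : Om n ⊆ U := fun z hz => hDU (Om_subset_disc hz)
  have h0Om : (0 : Fin n → ℂ) ∈ Om n := zero_mem_Om
  have h0U : (0 : Fin n → ℂ) ∈ U := hΩU h0Om
  have hφ₁' : AnalyticOnNhd ℝ φ₁ U := fun x hx => hφ₁ x hx
  have hφ₂' : AnalyticOnNhd ℝ φ₂ U := fun x hx => hφ₂ x hx
  have hψa : AnalyticOnNhd ℝ ψ U := fun x hx => (hφ₁ x hx).sub (hφ₂ x hx)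
  -- ψ vanishes on Om
  have hψ0 : ∀ x ∈ Om n, ψ x = 0 := fun x hx =>
    sub_eq_zero.mpr (heq x (Om_subset_disc hx))
  -- derivatives of ψ in imaginary directions vanish on Om
  have hψi : ∀ k, ∀ x ∈ Om n, Dd (iv k) ψ x = 0 := by
    intro k x hx
    have hx' : x ∈ U := hΩU hx
    have h1 : Dd (iv k) ψ x = Dd (iv k) φ₁ x - Dd (iv k) φ₂ x :=
      Dd_sub ((hφ₁ x hx').differentiableAt) ((hφ₂ x hx').differentiableAt) (iv k)
    have hreal : ∀ j, (ev (n := n) k j).im = 0 := ev_im k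
    have h2 : Dd (iv k) φ₁ x = 0 := ht₁ x (Om_subset_disc hx) (ev k) hreal
    have h3 : Dd (iv k) φ₂ x = 0 := ht₂ x (Om_subset_disc hx) (ev k) hreal
    rw [h1, h2, h3, sub_zero]
  -- the second-order relation for ψ
  have hexpand : ∀ (φ : (Fin n → ℂ) → ℝ) (j k : Fin n) (x : Fin n → ℂ),
      ddC φ x (ev j) (iv k) = -(Dd (ev j) (Dd (ev k) φ) x) - Dd (iv k) (Dd (iv j) φ) x := by
    intro φ j k x
    have hvec : Complex.I • (iv k : Fin n → ℂ) = -ev k := by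
      rw [iv, smul_smul, Complex.I_mul_I, neg_one_smul]
    have h1 : (fun y => dC φ y (iv k)) = fun y => -(Dd (ev k) φ y) := by
      funext y
      show fderiv ℝ φ y (Complex.I • iv k) = -(fderiv ℝ φ y (ev k))
      rw [hvec]
      exact map_neg _ _
    have h2 : (fun y => dC φ y (ev j)) = fun y => Dd (iv j) φ y := by
      funext y
      rfl
    show fderiv ℝ (fun y => dC φ y (iv k)) x (ev j)
        - fderiv ℝ (fun y => dC φ y (ev j)) x (iv k) = _
    rw [h1, h2, fderiv_fun_neg]
    simp only [ContinuousLinearMap.neg_apply]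
    rfl
  have hψR : ∀ j k, ∀ x ∈ U, Dd (ev j) (Dd (ev k) ψ) x + Dd (iv k) (Dd (iv j) ψ) x = 0 := by
    intro j k x hx
    have hE := hddc x hx (ev j) (iv k)
    rw [hexpand φ₁ j k x, hexpand φ₂ j k x] at hE
    -- reduce derivatives of ψ to differences
    have hsub1 : ∀ y ∈ U, Dd (ev k) ψ y = Dd (ev k) φ₁ y - Dd (ev k) φ₂ y := fun y hy =>
      Dd_sub ((hφ₁ y hy).differentiableAt) ((hφ₂ y hy).differentiableAt) (ev k)
    have hsub2 : ∀ y ∈ U, Dd (iv j) ψ y = Dd (iv j) φ₁ y - Dd (iv j) φ₂ y := fun y hy =>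
      Dd_sub ((hφ₁ y hy).differentiableAt) ((hφ₂ y hy).differentiableAt) (iv j)
    have hd1 : Dd (ev j) (Dd (ev k) ψ) x
        = Dd (ev j) (Dd (ev k) φ₁) x - Dd (ev j) (Dd (ev k) φ₂) x := by
      rw [Dd_congr hU hsub1 hx (ev j)]
      exact Dd_sub ((Dd_analytic hφ₁' (ev k) x hx).differentiableAt)
        ((Dd_analytic hφ₂' (ev k) x hx).differentiableAt) (ev j)
    have hd2 : Dd (iv k) (Dd (iv j) ψ) x
        = Dd (iv k) (Dd (iv j) φ₁) x - Dd (iv k) (Dd (iv j) φ₂) x := by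
      rw [Dd_congr hU hsub2 hx (iv k)]
      exact Dd_sub ((Dd_analytic hφ₁' (iv j) x hx).differentiableAt)
        ((Dd_analytic hφ₂' (iv j) x hx).differentiableAt) (iv k)
    rw [hd1, hd2]
    linarith
  have hGood : Good U ψ := ⟨hψa, hψ0, hψi, hψR⟩
  -- all iterated derivatives of ψ vanish at 0
  have hkey : ∀ (m : ℕ) (y : Fin n → ℂ), iteratedFDeriv ℝ m ψ 0 (fun _ => y) = 0 := by
    intro m y
    have hzero : (iteratedFDeriv ℝ m ψ 0).toMultilinearMap = 0 := by
      apply Module.Basis.ext_multilinear (fun _ => Pi.basis fun _ : Fin n => Complex.basisOneI)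
      intro w
      simp only [MultilinearMap.zero_apply]
      show iteratedFDeriv ℝ m ψ 0
        (fun i => (Pi.basis fun _ : Fin n => Complex.basisOneI) (w i)) = 0
      rw [iter_eq_DerL hU hψa m _ 0 h0U]
      have hmem : ∀ v ∈ List.ofFn (fun i => (Pi.basis fun _ : Fin n => Complex.basisOneI) (w i)),
          (∃ k, v = ev k) ∨ ∃ k, v = iv k := by
        intro v hv
        rw [List.mem_ofFn] at hv
        obtain ⟨i, rfl⟩ := hv
        rcases basis_vector_form (w i) with h | h
        · exact Or.inl ⟨(w i).1, h.symm ▸ rfl⟩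
        · exact Or.inr ⟨(w i).1, h.symm ▸ rfl⟩
      exact (good_DerL hU hΩU hGood _ hmem).2.1 0 h0Om
    have : iteratedFDeriv ℝ m ψ 0 (fun _ => y)
        = (iteratedFDeriv ℝ m ψ 0).toMultilinearMap (fun _ => y) := rfl
    rw [this, hzero]
    rfl
  -- ψ vanishes near 0
  obtain ⟨p, hp⟩ := hψa 0 h0U
  obtain ⟨r, hpr⟩ := hp
  have hball : ∀ y ∈ EMetric.ball (0 : Fin n → ℂ) r, ψ y = 0 := by
    intro y hy
    have hs := hpr.hasSum_iteratedFDeriv hy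
    have hterm : ∀ m : ℕ, (m.factorial : ℝ)⁻¹ • iteratedFDeriv ℝ m ψ 0 (fun _ => y) = 0 := by
      intro m
      rw [hkey m y, smul_zero]
    have hs' : HasSum (fun _ : ℕ => (0 : ℝ)) (ψ (0 + y)) := by
      have hfun : (fun m : ℕ => (m.factorial : ℝ)⁻¹ • iteratedFDeriv ℝ m ψ 0 (fun _ => y))
          = fun _ : ℕ => (0 : ℝ) := funext hterm
      rw [← hfun]
      exact hs
    have h0 : ψ (0 + y) = 0 := hs'.unique hasSum_zero
    simpa using h0
  have hev0 : ψ =ᶠ[𝓝 (0 : Fin n → ℂ)] 0 := by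
    filter_upwards [EMetric.isOpen_ball.mem_nhds (EMetric.mem_ball_self hpr.r_pos)] with y hy
    exact hball y hy
  have hfg : φ₁ =ᶠ[𝓝 (0 : Fin n → ℂ)] φ₂ := by
    filter_upwards [hev0] with y hy
    exact sub_eq_zero.mp hy
  -- the disc is compact and convex
  have hclosed : IsClosed (realDisc n) := by
    have h1 : realDisc n = (⋂ k, {z : Fin n → ℂ | (z k).im = 0}) ∩
        {z : Fin n → ℂ | (∑ k, (z k).re ^ 2) ≤ 1} := by
      ext z
      simp [realDisc, Set.mem_iInter]
    rw [h1]
    refine IsClosed.inter (isClosed_iInter fun k => ?_) ?_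
    · exact isClosed_eq (Complex.continuous_im.comp (continuous_apply k)) continuous_const
    · exact isClosed_le (continuous_finset_sum _ fun k _ =>
        (Complex.continuous_re.comp (continuous_apply k)).pow 2) continuous_const
  have hbdd : realDisc n ⊆ Metric.closedBall 0 1 := by
    intro z hz
    rw [Metric.mem_closedBall, dist_zero_right]
    rw [pi_norm_le_iff_of_nonneg zero_le_one]
    intro k
    have h2 : (z k).re ^ 2 ≤ 1 :=
      le_trans (Finset.single_le_sum (fun j _ => sq_nonneg ((z j).re))
        (Finset.mem_univ k)) hz.2
    have hzk : z k = ((z k).re : ℂ) := by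
      apply Complex.ext <;> simp [hz.1 k]
    rw [hzk, Complex.norm_real, Real.norm_eq_abs]
    nlinarith [_root_.sq_abs ((z k).re), abs_nonneg ((z k).re)]
  have hKc : IsCompact (realDisc n) :=
    (isCompact_closedBall (0 : Fin n → ℂ) 1).of_isClosed_subset hclosed hbdd
  have hKconv : Convex ℝ (realDisc n) := by
    intro z hz w hw a b ha hb hab
    constructor
    · intro k
      simp [Complex.add_im, Complex.smul_im, hz.1 k, hw.1 k]
    · have hterm : ∀ k : Fin n, (((a • z + b • w) k).re) ^ 2
          ≤ a * (z k).re ^ 2 + b * (w k).re ^ 2 := by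
        intro k
        have h := (Even.convexOn_pow (even_two (α := ℕ))).2 (Set.mem_univ ((z k).re))
          (Set.mem_univ ((w k).re)) ha hb hab
        simpa [smul_eq_mul, Complex.add_re, Complex.smul_re] using h
      calc (∑ k, (((a • z + b • w) k).re) ^ 2)
          ≤ ∑ k, (a * (z k).re ^ 2 + b * (w k).re ^ 2) :=
            Finset.sum_le_sum fun k _ => hterm k
        _ = a * ∑ k, (z k).re ^ 2 + b * ∑ k, (w k).re ^ 2 := by
            rw [Finset.sum_add_distrib, Finset.mul_sum, Finset.mul_sum]
        _ ≤ a * 1 + b * 1 :=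
            add_le_add (mul_le_mul_of_nonneg_left hz.2 ha)
              (mul_le_mul_of_nonneg_left hw.2 hb)
        _ = 1 := by rw [mul_one, mul_one, hab]
  obtain ⟨δ, hδpos, hδsub⟩ := hKc.exists_thickening_subset_open hU hDU
  refine ⟨Metric.thickening δ (realDisc n), Metric.isOpen_thickening,
    Metric.self_subset_thickening hδpos _, ?_⟩
  have hpre : IsPreconnected (Metric.thickening δ (realDisc n)) :=
    (hKconv.thickening δ).isPreconnected
  have h0disc : (0 : Fin n → ℂ) ∈ realDisc n := Om_subset_disc h0Om
  have h0mem : (0 : Fin n → ℂ) ∈ Metric.thickening δ (realDisc n) :=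
    Metric.self_subset_thickening hδpos _ h0disc
  exact AnalyticOnNhd.eqOn_of_preconnected_of_eventuallyEq
    (fun x hx => hφ₁ x (hδsub hx)) (fun x hx => hφ₂ x (hδsub hx)) hpre h0mem hfg
end
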